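/- If μ is the weight of a highest weight multiset-valued tableau of shape λ (so μ ⊇ λ as partitions), then μ and λ have the same number of parts: ℓ(μ) = ℓ(λ). -/

import Mathlib

/-! Signature rule on words: `+` for letter `i`, `-` for letter `i+1`,
cancel ordered pairs `-+`, leaving `+^p -^m`. -/

/-- Scanning left to right, returns (number of uncanceled `+`, number of uncanceled `-`). -/
def sigFold (i : ℕ) (w : List ℕ) : ℕ × ℕ :=
  w.foldl (fun pm a =>
    if a = i then (if 0 < pm.2 then (pm.1, pm.2 - 1) else (pm.1 + 1, pm.2))
    else if a = i + 1 then (pm.1, pm.2 + 1) else pm) (0, 0)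

/-- Position of the rightmost uncanceled `+` (a letter `i`). -/
def fPos (i : ℕ) (w : List ℕ) : Option ℕ :=
  ((List.range w.length).filter
    (fun j => decide (w[j]? = some i ∧ (sigFold i (w.take j)).2 = 0))).getLast?

/-- Position of the leftmost uncanceled `-` (a letter `i+1`). -/
def ePos (i : ℕ) (w : List ℕ) : Option ℕ :=
  ((List.range w.length).filter
    (fun j => decide (w[j]? = some (i + 1) ∧ (sigFold i (w.drop (j + 1))).1 = 0))).head?

/-- The crystal operator `f_i` on words: change the `i` at the rightmost uncanceled `+`
into an `i+1`. -/
def fWord (i : ℕ) (w : List ℕ) : Option (List ℕ) :=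
  (fPos i w).map (fun j => w.set j (i + 1))

/-- The crystal operator `e_i` on words: change the `i+1` at the leftmost uncanceled `-`
into an `i`. -/
def eWord (i : ℕ) (w : List ℕ) : Option (List ℕ) :=
  (ePos i w).map (fun j => w.set j i)

/-! Multiset-valued tableaux. -/

/-- `sh` is a partition: weakly decreasing list of positive integers. -/
def IsPartition (sh : List ℕ) : Prop :=
  sh.Pairwise (· ≥ ·) ∧ ∀ x ∈ sh, 0 < x

/-- The box in row `r`, column `c` (both 0-indexed) belongs to the Young diagram of `sh`. -/
abbrev InShape (sh : List ℕ) (r c : ℕ) : Prop := c < sh.getD r 0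

/-- A (semistandard) multiset-valued tableau of shape `sh` with entries in `{1, …, n}`:
every box of the shape is filled with a finite nonempty multiset, rows weakly increase
(max of a box ≤ min of the box to its right) and columns strictly increase. -/
def IsMVT (n : ℕ) (sh : List ℕ) (T : ℕ → ℕ → Multiset ℕ) : Prop :=
  (∀ r c, InShape sh r c → T r c ≠ 0) ∧
  (∀ r c, ¬ InShape sh r c → T r c = 0) ∧
  (∀ r c, ∀ x ∈ T r c, 1 ≤ x ∧ x ≤ n) ∧
  (∀ r c, InShape sh r (c + 1) → ∀ x ∈ T r c, ∀ y ∈ T r (c + 1), x ≤ y) ∧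
  (∀ r c, InShape sh (r + 1) c → ∀ x ∈ T r c, ∀ y ∈ T (r + 1) c, x < y)

/-- Number of boxes in column `c` of the shape `sh`. -/
def colHeight (sh : List ℕ) (c : ℕ) : ℕ := (sh.filter (fun p => decide (c < p))).length

/-- Sort a multiset increasingly into a list. -/
def msort (M : Multiset ℕ) : List ℕ := M.sort (· ≤ ·)

/-- Column reading word: the smallest entry of each box from bottom to top, then the
remaining entries of each box, smallest to largest, boxes top to bottom. -/
def colWord (sh : List ℕ) (T : ℕ → ℕ → Multiset ℕ) (c : ℕ) : List ℕ :=
  ((List.range (colHeight sh c)).reverse.map (fun r => (msort (T r c)).take 1)).flatten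
    ++ ((List.range (colHeight sh c)).map (fun r => (msort (T r c)).drop 1)).flatten

/-- The boxes corresponding to the letters of `colWord`, in order. -/
def colBoxes (sh : List ℕ) (T : ℕ → ℕ → Multiset ℕ) (c : ℕ) : List (ℕ × ℕ) :=
  ((List.range (colHeight sh c)).reverse.map
      (fun r => ((msort (T r c)).take 1).map (fun _ => (r, c)))).flatten
    ++ ((List.range (colHeight sh c)).map
      (fun r => ((msort (T r c)).drop 1).map (fun _ => (r, c)))).flatten

/-- The reading word of a multiset-valued tableau: column reading words, columns left to right. -/
def mvtWord (sh : List ℕ) (T : ℕ → ℕ → Multiset ℕ) : List ℕ :=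
  ((List.range (sh.headD 0)).map (colWord sh T)).flatten

/-- The boxes corresponding to the letters of `mvtWord`, in order. -/
def mvtBoxes (sh : List ℕ) (T : ℕ → ℕ → Multiset ℕ) : List (ℕ × ℕ) :=
  ((List.range (sh.headD 0)).map (colBoxes sh T)).flatten

/-- The crystal operator `f_i` on multiset-valued tableaux: act on the box `b` of the
rightmost uncanceled `+`; if the box below `b` contains an `i+1`, move the `i` from `b`
to an `i+1` in that box, otherwise replace the `i` in `b` by an `i+1`. -/
def mvtF (sh : List ℕ) (i : ℕ) (T : ℕ → ℕ → Multiset ℕ) :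
    Option (ℕ → ℕ → Multiset ℕ) :=
  (fPos i (mvtWord sh T)).map (fun j =>
    let rc := (mvtBoxes sh T).getD j (0, 0)
    let r := rc.1
    let c := rc.2
    if (i + 1) ∈ T (r + 1) c then
      fun r' c' =>
        if r' = r ∧ c' = c then T r c - {i}
        else if r' = r + 1 ∧ c' = c then T (r + 1) c + {i + 1}
        else T r' c'
    else
      fun r' c' => if r' = r ∧ c' = c then (T r c - {i}) + {i + 1} else T r' c')

/-- The crystal operator `e_i` on multiset-valued tableaux: act on the box `b` of the
leftmost uncanceled `-`; if the box above `b` contains an `i`, move the `i+1` from `b`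
to an `i` in that box, otherwise replace the `i+1` in `b` by an `i`. -/
def mvtE (sh : List ℕ) (i : ℕ) (T : ℕ → ℕ → Multiset ℕ) :
    Option (ℕ → ℕ → Multiset ℕ) :=
  (ePos i (mvtWord sh T)).map (fun j =>
    let rc := (mvtBoxes sh T).getD j (0, 0)
    let r := rc.1
    let c := rc.2
    if 0 < r ∧ i ∈ T (r - 1) c then
      fun r' c' =>
        if r' = r ∧ c' = c then T r c - {i + 1}
        else if r' = r - 1 ∧ c' = c then T (r - 1) c + {i}
        else T r' c'
    else
      fun r' c' => if r' = r ∧ c' = c then (T r c - {i + 1}) + {i} else T r' c')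

/-- A multiset-valued tableau is highest weight if it is killed by all raising operators. -/
def MvtHW (sh : List ℕ) (T : ℕ → ℕ → Multiset ℕ) : Prop :=
  ∀ i, 1 ≤ i → mvtE sh i T = none


/-! ### Auxiliary lemmas for the proof -/

private def sstep (i : ℕ) : ℕ × ℕ → ℕ → ℕ × ℕ := fun pm a =>
    if a = i then (if 0 < pm.2 then (pm.1, pm.2 - 1) else (pm.1 + 1, pm.2))
    else if a = i + 1 then (pm.1, pm.2 + 1) else pm

lemma sigFold_eq (i : ℕ) (w : List ℕ) : sigFold i w = w.foldl (sstep i) (0,0) := rfl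

lemma sstep_A (i : ℕ) (w : List ℕ) : ∀ p m : ℕ,
    (w.foldl (sstep i) (p, m)).1 + m + w.count (i+1) =
    (w.foldl (sstep i) (p, m)).2 + p + w.count i := by
  induction w with
  | nil => intro p m; simp; omega
  | cons a t ih =>
    intro p m
    have hcc : ∀ b : ℕ, (a :: t).count b = t.count b + (if a = b then 1 else 0) := by
      intro b; rw [List.count_cons]; simp [beq_iff_eq]
    by_cases hai : a = i
    · by_cases hm : 0 < m
      · have := ih p (m-1)
        rw [List.foldl_cons]
        simp only [sstep, if_pos hai, if_pos hm]
        rw [hcc, hcc]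
        simp only [if_pos hai, if_neg (by omega : ¬ a = i + 1)]
        omega
      · have h0 : m = 0 := by omega
        have := ih (p+1) 0
        rw [List.foldl_cons]
        simp only [sstep, h0, if_pos hai, if_neg (by omega : ¬ (0:ℕ) < 0)]
        rw [hcc, hcc]
        simp only [if_pos hai, if_neg (by omega : ¬ a = i + 1)]
        omega
    · by_cases hai1 : a = i + 1
      · have := ih p (m+1)
        rw [List.foldl_cons]
        simp only [sstep, if_neg hai, if_pos hai1]
        rw [hcc, hcc]
        simp only [if_pos hai1, if_neg hai]
        omega
      · have := ih p m
        rw [List.foldl_cons]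
        simp only [sstep, if_neg hai, if_neg hai1]
        rw [hcc, hcc]
        simp only [if_neg hai1, if_neg hai]
        omega

lemma sstep_B (i : ℕ) (w : List ℕ) : ∀ p m : ℕ,
    (∀ j, (w.drop j).count (i+1) ≤ (w.drop j).count i) →
    m + w.count (i+1) ≤ w.count i →
    (w.foldl (sstep i) (p, m)).2 = 0 := by
  induction w with
  | nil => intro p m _ h; simp at h ⊢; omega
  | cons a t ih =>
    intro p m hsuf hm
    have hsuf' : ∀ j, (t.drop j).count (i+1) ≤ (t.drop j).count i := fun j => hsuf (j+1)
    have hcc : ∀ b : ℕ, (a :: t).count b = t.count b + (if a = b then 1 else 0) := by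
      intro b; rw [List.count_cons]; simp [beq_iff_eq]
    rw [hcc, hcc] at hm
    by_cases hai : a = i
    · rw [if_pos hai, if_neg (by omega : ¬ a = i + 1)] at hm
      by_cases hm0 : 0 < m
      · have := ih p (m-1) hsuf' (by omega)
        rw [List.foldl_cons]
        simpa only [sstep, if_pos hai, if_pos hm0] using this
      · have h0 : m = 0 := by omega
        have := ih (p+1) 0 hsuf' (by simpa using hsuf' 0)
        rw [List.foldl_cons]
        simpa only [sstep, h0, if_pos hai, if_neg (by omega : ¬ (0:ℕ) < 0)] using this
    · by_cases hai1 : a = i + 1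
      · rw [if_pos hai1, if_neg hai] at hm
        have := ih p (m+1) hsuf' (by omega)
        rw [List.foldl_cons]
        simpa only [sstep, if_neg hai, if_pos hai1] using this
      · rw [if_neg hai1, if_neg hai] at hm
        have := ih p m hsuf' (by omega)
        rw [List.foldl_cons]
        simpa only [sstep, if_neg hai, if_neg hai1] using this

/-- highest-weight (no uncanceled minus) implies suffix ballot. -/
lemma ballot_of_hw (i : ℕ) (w : List ℕ)
    (hq : ∀ j, w[j]? = some (i+1) → (sigFold i (w.drop (j+1))).1 ≠ 0) :
    ∀ j, (w.drop j).count (i+1) ≤ (w.drop j).count i := by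
  induction w with
  | nil => intro j; simp
  | cons a t ih =>
    have hq' : ∀ j, t[j]? = some (i+1) → (sigFold i (t.drop (j+1))).1 ≠ 0 := by
      intro j hj
      have := hq (j+1) (by simpa using hj)
      simpa using this
    have hP := ih hq'
    intro j
    have hcc : ∀ b : ℕ, (a :: t).count b = t.count b + (if a = b then 1 else 0) := by
      intro b; rw [List.count_cons]; simp [beq_iff_eq]
    match j with
    | (j+1) => simpa using hP j
    | 0 =>
      simp only [List.drop_zero]
      rw [hcc, hcc]
      by_cases hai1 : a = i + 1
      · rw [if_pos hai1, if_neg (by omega : ¬ a = i)]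
        have hp : (sigFold i t).1 ≠ 0 := by
          have := hq 0 (by simpa using hai1)
          simpa using this
        have hB := sstep_B i t 0 0 hP (by simpa using hP 0)
        have hA := sstep_A i t 0 0
        rw [sigFold_eq] at hp
        omega
      · by_cases hai : a = i
        · rw [if_pos hai, if_neg hai1]
          have := hP 0
          simp at this
          omega
        · rw [if_neg hai, if_neg hai1]
          have := hP 0
          simp at this
          omega

lemma mem_msort {M : Multiset ℕ} {a : ℕ} : a ∈ msort M ↔ a ∈ M := Multiset.mem_sort _
lemma msort_ne_nil {M : Multiset ℕ} (h : M ≠ 0) : msort M ≠ [] := by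
  intro hn
  apply h
  have := M.sort_eq (· ≤ ·)
  rw [msort] at hn
  rw [hn] at this
  simpa using this.symm

lemma le_getLast_of_sorted {l : List ℕ} (hs : l.Pairwise (· ≤ ·)) {a : ℕ} (ha : a ∈ l)
    (hne : l ≠ []) : a ≤ l.getLast hne := by
  obtain ⟨i, hi, rfl⟩ := List.getElem_of_mem ha
  rw [List.getLast_eq_getElem]
  rcases Nat.lt_or_ge i (l.length - 1) with h | h
  · exact (List.pairwise_iff_getElem.mp hs) i (l.length - 1) hi (by omega) h
  · have : i = l.length - 1 := by omega
    subst this; rfl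

lemma msort_max {M : Multiset ℕ} (h : M ≠ 0) {a : ℕ} (ha : a ∈ M) :
    a ≤ (msort M).getLast (msort_ne_nil h) :=
  le_getLast_of_sorted (M.pairwise_sort _) (mem_msort.mpr ha) _

lemma msort_getLast_mem {M : Multiset ℕ} (h : M ≠ 0) :
    (msort M).getLast (msort_ne_nil h) ∈ M :=
  mem_msort.mp (List.getLast_mem _)

/-- monotonicity of getD for a weakly decreasing list -/
lemma getD_mono {sh : List ℕ} (hs : sh.Pairwise (· ≥ ·)) {a b : ℕ} (hab : a ≤ b) :
    sh.getD b 0 ≤ sh.getD a 0 := by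
  rcases Nat.lt_or_ge b sh.length with hb | hb
  · have ha : a < sh.length := lt_of_le_of_lt hab hb
    rw [sh.getD_eq_getElem 0 hb, sh.getD_eq_getElem 0 ha]
    rcases Nat.lt_or_ge a b with h | h
    · exact (List.pairwise_iff_getElem.mp hs) a b ha hb h
    · have : a = b := by omega
      subst this; rfl
  · rw [sh.getD_eq_default 0 hb]
    exact Nat.zero_le _

lemma lt_length_of_inShape {sh : List ℕ} {r c : ℕ} (h : InShape sh r c) : r < sh.length := by
  by_contra hn
  rw [InShape, sh.getD_eq_default 0 (by omega)] at h
  omega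

lemma colHeight_iff {sh : List ℕ} (hs : sh.Pairwise (· ≥ ·)) (s c : ℕ) :
    s < colHeight sh c ↔ InShape sh s c := by
  constructor
  · intro h
    by_contra hn
    rw [InShape, Nat.not_lt] at hn
    -- show colHeight ≤ s
    have hsplit : sh = sh.take s ++ sh.drop s := (List.take_append_drop s sh).symm
    have hdrop : (sh.drop s).filter (fun p => decide (c < p)) = [] := by
      rw [List.filter_eq_nil_iff]
      intro a ha
      obtain ⟨i, hi, rfl⟩ := List.getElem_of_mem ha
      rw [List.getElem_drop]
      have hsi : s + i < sh.length := by
        have : (sh.drop s).length = sh.length - s := List.length_drop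
        omega
      have h1 : sh[s+i]'hsi ≤ sh.getD s 0 := by
        rw [← sh.getD_eq_getElem 0 hsi]
        exact getD_mono hs (by omega)
      simp only [decide_eq_true_eq]
      omega
    have : colHeight sh c ≤ s := by
      rw [colHeight]
      conv_lhs => rw [hsplit]
      rw [List.filter_append, hdrop, List.append_nil]
      calc ((sh.take s).filter _).length ≤ (sh.take s).length := List.length_filter_le _ _
        _ ≤ s := by simpa using List.length_take_le s sh
    omega
  · intro h
    have hlen : s < sh.length := lt_length_of_inShape h
    have htake : (sh.take (s+1)).filter (fun p => decide (c < p)) = sh.take (s+1) := by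
      rw [List.filter_eq_self]
      intro a ha
      obtain ⟨i, hi, rfl⟩ := List.getElem_of_mem ha
      rw [List.getElem_take]
      have hi' : i < sh.length := by
        have := List.length_take_le (s+1) sh
        omega
      have h1 : sh.getD s 0 ≤ sh.getD i 0 := getD_mono hs (by
        have : (sh.take (s+1)).length = min (s+1) sh.length := List.length_take
        omega)
      rw [sh.getD_eq_getElem 0 hi'] at h1
      have h2 : sh.getD s 0 > c := h
      simp only [decide_eq_true_eq]
      omega
    have hsplit : sh = sh.take (s+1) ++ sh.drop (s+1) := (List.take_append_drop _ sh).symm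
    have : s + 1 ≤ colHeight sh c := by
      rw [colHeight]
      conv_lhs => rw [show s + 1 = (sh.take (s+1)).length by simp; omega]
      conv_rhs => rw [hsplit]
      rw [List.filter_append, List.length_append, htake]
      omega
    omega

lemma mem_colWord {sh : List ℕ} {T : ℕ → ℕ → Multiset ℕ} {c y : ℕ}
    (h : y ∈ colWord sh T c) : ∃ s, s < colHeight sh c ∧ y ∈ msort (T s c) := by
  rw [colWord, List.mem_append] at h
  rcases h with h | h <;>
  · rw [List.mem_flatten] at h
    obtain ⟨l, hl, hy⟩ := h
    rw [List.mem_map] at hl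
    obtain ⟨s, hs, rfl⟩ := hl
    first
    | exact ⟨s, by simpa using hs, (List.take_sublist _ _).mem hy⟩
    | exact ⟨s, by simpa using hs, (List.drop_sublist _ _).mem hy⟩

lemma mem_mvtWord {sh : List ℕ} {T : ℕ → ℕ → Multiset ℕ} {y : ℕ}
    (h : y ∈ mvtWord sh T) :
    ∃ s c, c < sh.headD 0 ∧ s < colHeight sh c ∧ y ∈ msort (T s c) := by
  rw [mvtWord, List.mem_flatten] at h
  obtain ⟨l, hl, hy⟩ := h
  rw [List.mem_map] at hl
  obtain ⟨c, hc, rfl⟩ := hl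
  obtain ⟨s, h1, h2⟩ := mem_colWord hy
  exact ⟨s, c, by simpa using hc, h1, h2⟩

lemma mem_mvtWord_of {sh : List ℕ} {T : ℕ → ℕ → Multiset ℕ} {y r c : ℕ}
    (hc : c < sh.headD 0) (hr : r < colHeight sh c) (hy : y ∈ msort (T r c)) :
    y ∈ mvtWord sh T := by
  rw [mvtWord, List.mem_flatten]
  refine ⟨colWord sh T c, List.mem_map.mpr ⟨c, by simpa using hc, rfl⟩, ?_⟩
  rw [colWord, List.mem_append]
  have := (msort (T r c)).take_append_drop 1
  rw [← this, List.mem_append] at hy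
  rcases hy with hy | hy
  · left
    rw [List.mem_flatten]
    exact ⟨_, List.mem_map.mpr ⟨r, by simpa using hr, rfl⟩, hy⟩
  · right
    rw [List.mem_flatten]
    exact ⟨_, List.mem_map.mpr ⟨r, by simpa using hr, rfl⟩, hy⟩

/-- The main word-splitting lemma: the word splits just after the largest entry
of box (r,c), and everything after comes from boxes strictly below in the same column,
boxes in the same column other than (r,c), or columns to the right. -/
lemma word_split (sh : List ℕ) (T : ℕ → ℕ → Multiset ℕ) (r c : ℕ)
    (hc : c < sh.headD 0) (hr : r < colHeight sh c) (hne : msort (T r c) ≠ []) :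
    ∃ P L, mvtWord sh T = P ++ (msort (T r c)).getLast hne :: L ∧
      ∀ y ∈ L, ∃ s c', s < colHeight sh c' ∧ c ≤ c' ∧ c' < sh.headD 0 ∧
        ¬(s = r ∧ c' = c) ∧ y ∈ msort (T s c') := by
  set N := sh.headD 0 with hN
  set h := colHeight sh c with hh
  -- split the word at column c
  have hrange : List.range N = List.range c ++ [c] ++ (List.range (N - c - 1)).map ((c+1) + ·) := by
    have h1 : List.range (c+1) = List.range c ++ [c] := List.range_succ
    have h2 : List.range ((c+1) + (N - c - 1)) = List.range (c+1) ++
        (List.range (N - c - 1)).map ((c+1) + ·) := List.range_add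
    conv_lhs => rw [show N = (c+1) + (N - c - 1) from by omega]
    rw [h2, h1]
  have hword : mvtWord sh T =
      ((List.range c).map (colWord sh T)).flatten ++ colWord sh T c ++
        (((List.range (N - c - 1)).map ((c+1) + ·)).map (colWord sh T)).flatten := by
    rw [mvtWord, ← hN, hrange]
    simp [List.map_append, List.flatten_append]
  set A := ((List.range c).map (colWord sh T)).flatten with hA
  set B := (((List.range (N - c - 1)).map ((c+1) + ·)).map (colWord sh T)).flatten with hB
  have hBmem : ∀ y ∈ B, ∃ s c', s < colHeight sh c' ∧ c ≤ c' ∧ c' < N ∧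
      ¬(s = r ∧ c' = c) ∧ y ∈ msort (T s c') := by
    intro y hy
    rw [hB, List.mem_flatten] at hy
    obtain ⟨l, hl, hyl⟩ := hy
    rw [List.mem_map] at hl
    obtain ⟨c', hc', rfl⟩ := hl
    rw [List.mem_map] at hc'
    obtain ⟨d, hd, rfl⟩ := hc'
    rw [List.mem_range] at hd
    obtain ⟨s, hs1, hs2⟩ := mem_colWord hyl
    exact ⟨s, c+1+d, hs1, by omega, by omega, by omega, hs2⟩
  -- now split colWord c
  set x := (msort (T r c)).getLast hne with hx
  set restf : ℕ → List ℕ := fun s => (msort (T s c)).drop 1 with hrestf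
  set take1f : ℕ → List ℕ := fun s => (msort (T s c)).take 1 with htake1f
  have hrange2 : List.range h = List.range r ++ [r] ++ (List.range (h - r - 1)).map ((r+1) + ·) := by
    have h1 : List.range (r+1) = List.range r ++ [r] := List.range_succ
    have h2 : List.range ((r+1) + (h - r - 1)) = List.range (r+1) ++
        (List.range (h - r - 1)).map ((r+1) + ·) := List.range_add
    conv_lhs => rw [show h = (r+1) + (h - r - 1) from by omega]
    rw [h2, h1]
  have hcol : colWord sh T c =
      (((List.range (h - r - 1)).map ((r+1) + ·)).reverse.map take1f).flatten
        ++ take1f r ++ ((List.range r).reverse.map take1f).flatten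
        ++ (((List.range r).map restf).flatten ++ restf r
            ++ (((List.range (h - r - 1)).map ((r+1) + ·)).map restf).flatten) := by
    rw [colWord, ← hh, hrange2]
    simp only [List.reverse_append, List.map_append, List.flatten_append, List.map_reverse]
    simp [List.append_assoc, hrestf, htake1f, List.drop_one]
  set MA := (((List.range (h - r - 1)).map ((r+1) + ·)).reverse.map take1f).flatten with hMA
  set MB := ((List.range r).reverse.map take1f).flatten with hMB
  set RA := ((List.range r).map restf).flatten with hRA
  set RB := (((List.range (h - r - 1)).map ((r+1) + ·)).map restf).flatten with hRB
  have hMBmem : ∀ y ∈ MB, ∃ s, s < r ∧ y ∈ msort (T s c) := by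
    intro y hy
    rw [hMB, List.mem_flatten] at hy
    obtain ⟨l, hl, hyl⟩ := hy
    rw [List.mem_map] at hl
    obtain ⟨s, hs, rfl⟩ := hl
    rw [List.mem_reverse, List.mem_range] at hs
    exact ⟨s, hs, (List.take_sublist _ _).mem hyl⟩
  have hRAmem : ∀ y ∈ RA, ∃ s, s < r ∧ y ∈ msort (T s c) := by
    intro y hy
    rw [hRA, List.mem_flatten] at hy
    obtain ⟨l, hl, hyl⟩ := hy
    rw [List.mem_map] at hl
    obtain ⟨s, hs, rfl⟩ := hl
    rw [List.mem_range] at hs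
    exact ⟨s, hs, (List.drop_sublist _ _).mem hyl⟩
  have hRBmem : ∀ y ∈ RB, ∃ s, r < s ∧ s < h ∧ y ∈ msort (T s c) := by
    intro y hy
    rw [hRB, List.mem_flatten] at hy
    obtain ⟨l, hl, hyl⟩ := hy
    rw [List.mem_map] at hl
    obtain ⟨s, hs, rfl⟩ := hl
    rw [List.mem_map] at hs
    obtain ⟨d, hd, rfl⟩ := hs
    rw [List.mem_range] at hd
    exact ⟨r+1+d, by omega, by omega, (List.drop_sublist _ _).mem hyl⟩
  rcases le_or_gt (msort (T r c)).length 1 with hlen | hlen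
  · -- singleton box: x is the min, sits in the take-1 part
    have hlen1 : (msort (T r c)).length = 1 := by
      have := List.length_pos_iff.mpr hne
      omega
    obtain ⟨a, ha⟩ := List.length_eq_one_iff.mp hlen1
    have hxa : x = a := by rw [hx]; simp [ha]
    have ht1 : take1f r = [x] := by rw [htake1f]; simp [ha, hxa]
    have hrf : restf r = [] := by rw [hrestf]; simp [ha]
    refine ⟨A ++ MA, MB ++ (RA ++ RB ++ B), ?_, ?_⟩
    · rw [hword, hcol, ht1, hrf]
      simp [List.append_assoc]
    · intro y hy
      simp only [List.mem_append] at hy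
      rcases hy with hy | ((hy | hy) | hy)
      · obtain ⟨s, hs, hys⟩ := hMBmem y hy
        exact ⟨s, c, by omega, le_refl c, hc, by omega, hys⟩
      · obtain ⟨s, hs, hys⟩ := hRAmem y hy
        exact ⟨s, c, by omega, le_refl c, hc, by omega, hys⟩
      · obtain ⟨s, hs1, hs2, hys⟩ := hRBmem y hy
        exact ⟨s, c, hs2, le_refl c, hc, by omega, hys⟩
      · exact hBmem y hy
  · -- box with ≥ 2 entries: x is the last entry of the rest part
    have hrne : restf r ≠ [] := by
      rw [hrestf]
      simp only [ne_eq, List.drop_eq_nil_iff]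
      omega
    have hgl : (restf r).getLast hrne = x := by
      rw [hx]
      exact List.getLast_drop (l := msort (T r c)) (i := 1) hrne
    have hsplit2 : restf r = (restf r).dropLast ++ [x] := by
      conv_lhs => rw [← List.dropLast_append_getLast hrne]
      rw [hgl]
    refine ⟨A ++ MA ++ take1f r ++ MB ++ RA ++ (restf r).dropLast, RB ++ B, ?_, ?_⟩
    · rw [hword, hcol, hsplit2]
      simp [List.append_assoc]
    · intro y hy
      simp only [List.mem_append] at hy
      rcases hy with hy | hy
      · obtain ⟨s, hs1, hs2, hys⟩ := hRBmem y hy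
        exact ⟨s, c, hs2, le_refl c, hc, by omega, hys⟩
      · exact hBmem y hy



/-- Transitive column strictness: entries strictly below exceed entries above. -/
lemma col_chain {n : ℕ} {lam : List ℕ} (hlam : IsPartition lam)
    {T : ℕ → ℕ → Multiset ℕ} (hT : IsMVT n lam T) :
    ∀ d r c x y, InShape lam (r+1+d) c → x ∈ T r c → y ∈ T (r+1+d) c → x < y := by
  intro d
  induction d with
  | zero => exact fun r c x y hin hx hy => hT.2.2.2.2 r c hin x hx y hy
  | succ d ih =>
    intro r c x y hin hx hy
    rw [show r+1+(d+1) = (r+1+d)+1 from by omega] at hin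
    have hin' : InShape lam (r+1+d) c :=
      lt_of_lt_of_le hin (getD_mono hlam.1 (by omega))
    obtain ⟨z, hz⟩ := Multiset.exists_mem_of_ne_zero (hT.1 _ _ hin')
    have h1 : x < z := ih r c x z hin' hx hz
    have h2 : z < y := hT.2.2.2.2 (r+1+d) c hin z hz y hy
    omega

/-- In a tableau whose word satisfies the suffix ballot condition, every entry in
row `r` equals `r + 1`. -/
lemma row_all {n : ℕ} {lam : List ℕ} (hlam : IsPartition lam)
    {T : ℕ → ℕ → Multiset ℕ} (hT : IsMVT n lam T)
    (hbal : ∀ i, 1 ≤ i → ∀ j,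
      ((mvtWord lam T).drop j).count (i+1) ≤ ((mvtWord lam T).drop j).count i) :
    ∀ r c, InShape lam r c → ∀ y ∈ T r c, y = r + 1 := by
  intro r
  induction r using Nat.strong_induction_on with
  | _ r ih =>
  have upper : ∀ k c, lam.getD r 0 ≤ c + k → InShape lam r c → ∀ y ∈ T r c, y ≤ r + 1 := by
    intro k
    induction k with
    | zero =>
      intro c hcap hin
      exfalso; rw [InShape] at hin; omega
    | succ k ihk =>
      intro c hcap hin y hy
      by_contra hgt
      push_neg at hgt
      have hne0 : T r c ≠ 0 := hT.1 r c hin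
      have hnes : msort (T r c) ≠ [] := msort_ne_nil hne0
      set x := (msort (T r c)).getLast hnes with hxdef
      have hxmem : x ∈ T r c := msort_getLast_mem hne0
      have hxy : y ≤ x := msort_max hne0 hy
      have hx2 : r + 2 ≤ x := by omega
      have hright : lam.getD r 0 ≤ c + 1 := by
        by_contra hcon
        push_neg at hcon
        have hin1 : InShape lam r (c+1) := hcon
        obtain ⟨z, hz⟩ := Multiset.exists_mem_of_ne_zero (hT.1 _ _ hin1)
        have hz1 : z ≤ r + 1 := ihk (c+1) (by omega) hin1 z hz
        have : x ≤ z := hT.2.2.2.1 r c hin1 x hxmem z hz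
        omega
      have hcN : c < lam.headD 0 := by
        have h0 : lam.headD 0 = lam.getD 0 0 := by cases lam <;> simp
        have := getD_mono hlam.1 (Nat.zero_le r)
        rw [InShape] at hin
        omega
      have hrh : r < colHeight lam c := (colHeight_iff hlam.1 r c).mpr hin
      obtain ⟨P, L, hPL, hLmem⟩ := word_split lam T r c hcN hrh hnes
      rw [← hxdef] at hPL
      have hbx := hbal (x-1) (by omega) P.length
      rw [hPL, List.drop_left] at hbx
      rw [show x - 1 + 1 = x by omega] at hbx
      have hcx : 0 < (x :: L).count x := by simp
      have hmem : x - 1 ∈ x :: L := by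
        rw [← List.count_pos_iff]; omega
      have hmemL : x - 1 ∈ L := by
        rcases List.mem_cons.mp hmem with h | h
        · omega
        · exact h
      obtain ⟨s, c', hs, hcc', hc'N, hnot, hys⟩ := hLmem _ hmemL
      have hins : InShape lam s c' := (colHeight_iff hlam.1 s c').mp hs
      have hysT : (x-1) ∈ T s c' := mem_msort.mp hys
      rcases Nat.lt_or_ge c c' with hlt | hge
      · have hslt : s < r := by
          by_contra hcon
          push_neg at hcon
          have := getD_mono hlam.1 hcon
          rw [InShape] at hins
          omega
        have := ih s hslt c' hins _ hysT
        omega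
      · have hceq : c' = c := by omega
        subst hceq
        rcases Nat.lt_trichotomy s r with h1 | h1 | h1
        · have := ih s h1 c' hins _ hysT
          omega
        · exact hnot ⟨h1, rfl⟩
        · have : x < x - 1 := by
            have he : r + 1 + (s - r - 1) = s := by omega
            have hchain := col_chain hlam hT (s - r - 1) r c' x (x-1)
              (by rw [he]; exact hins) hxmem (by rw [he]; exact hysT)
            exact hchain
          omega
  intro c hin y hy
  have hup := upper (lam.getD r 0) c (by omega) hin y hy
  match r, hin, hup with
  | 0, hin, hup =>
    have := hT.2.2.1 0 c y hy
    omega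
  | (r'+1), hin, hup =>
    have hin' : InShape lam r' c := lt_of_lt_of_le hin (getD_mono hlam.1 (by omega))
    obtain ⟨z, hz⟩ := Multiset.exists_mem_of_ne_zero (hT.1 _ _ hin')
    have hz1 : z = r' + 1 := ih r' (by omega) c hin' z hz
    have : z < y := hT.2.2.2.2 r' c hin z hz y hy
    omega

/-- If `μ` is the weight of a highest weight multiset-valued tableau of
shape `λ` (so `μ ⊇ λ`), then `μ` and `λ` have the same number of parts: the number of
letters occurring in `T` equals the length of `λ`. -/
theorem mvt_highest_weight_same_length
    (n : ℕ) (lam : List ℕ) (hlam : IsPartition lam)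
    (T : ℕ → ℕ → Multiset ℕ) (hT : IsMVT n lam T) (hhw : MvtHW lam T)
    (mu : List ℕ) (hmu : IsPartition mu)
    (hwt : ∀ i, (mvtWord lam T).count (i + 1) = mu.getD i 0)
    (hnotrail : ∀ x ∈ mu, 0 < x) :
    mu.length = lam.length := by
  classical
  set w := mvtWord lam T with hw
  -- highest weight gives the suffix ballot condition
  have hbal : ∀ i, 1 ≤ i → ∀ j, (w.drop j).count (i+1) ≤ (w.drop j).count i := by
    intro i hi
    apply ballot_of_hw
    intro j hj hcontra
    have hnone := hhw i hi
    rw [mvtE, Option.map_eq_none_iff] at hnone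
    rw [ePos, List.head?_eq_none_iff, List.filter_eq_nil_iff] at hnone
    have hjlt : j < w.length := (List.getElem?_eq_some_iff.mp hj).1
    exact hnone j (List.mem_range.mpr hjlt) (by rw [← hw]; simp [hj, hcontra])
  have hrow := row_all hlam hT hbal
  -- no letter exceeding the number of rows occurs
  have hcount0 : w.count (lam.length + 1) = 0 := by
    rw [List.count_eq_zero]
    intro hmem
    obtain ⟨s, c, hcN, hsh, hys⟩ := mem_mvtWord hmem
    have hins : InShape lam s c := (colHeight_iff hlam.1 s c).mp hsh
    have := hrow s c hins _ (mem_msort.mp hys)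
    have hs : s = lam.length := by omega
    subst hs
    rw [InShape, lam.getD_eq_default 0 (le_refl _)] at hins
    omega
  have hle : mu.length ≤ lam.length := by
    by_contra hcon
    push_neg at hcon
    have h1 := hwt lam.length
    rw [hcount0] at h1
    have h2 : mu.getD lam.length 0 = mu[lam.length]'hcon := mu.getD_eq_getElem 0 hcon
    have h3 := hnotrail _ (mu.getElem_mem hcon)
    omega
  have hge : lam.length ≤ mu.length := by
    rcases Nat.eq_zero_or_pos lam.length with h0 | h0
    · omega
    · -- the box (lam.length - 1, 0) contains the letter lam.length
      set r := lam.length - 1 with hrdef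
      have hrlt : r < lam.length := by omega
      have hin : InShape lam r 0 := by
        rw [InShape, lam.getD_eq_getElem 0 hrlt]
        exact hlam.2 _ (lam.getElem_mem hrlt)
      obtain ⟨z, hz⟩ := Multiset.exists_mem_of_ne_zero (hT.1 _ _ hin)
      have hz1 : z = r + 1 := hrow r 0 hin z hz
      have hmemw : z ∈ w := by
        apply mem_mvtWord_of (r := r) (c := 0)
        · have h0' : lam.headD 0 = lam.getD 0 0 := by cases lam <;> simp
          have := getD_mono hlam.1 (Nat.zero_le r)
          rw [InShape] at hin
          omega
        · exact (colHeight_iff hlam.1 r 0).mpr hin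
        · exact mem_msort.mpr hz
      have hpos : 0 < w.count (r + 1) := by
        rw [List.count_pos_iff]
        rwa [hz1] at hmemw
      have h1 := hwt r
      have : r < mu.length := by
        by_contra hcon
        push_neg at hcon
        rw [mu.getD_eq_default 0 hcon] at h1
        omega
      omega
  omega
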